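/- Theorem 2 (recursive feasibility of the persistence-of-excitation optimization). Let m, h, l ≥ 1 be integers, ρ0 > 0, and Ŵ ⊆ ℝᵐ a nonempty set. For a sequence ŵ : ℕ → ℝᵐ and a time i, define its l-periodic extension beyond i as the sequence e^{(i)} : ℕ → ℝᵐ with e^{(i)}(t) = ŵ(t) for t ≤ i and e^{(i)}(t) = e^{(i)}(t − l) for t > i, and let E^{(i)}_t ∈ ℝ^{m×h} be the matrix whose (j+1)-th column is e^{(i)}(t−j), j = 0,…,h−1. Say the PE constraints hold at time i ≥ h+l−1 if ŵ(i) ∈ Ŵ and, for every k ∈ {0,…,h−1}, Σ_{j=0}^{l−1} E^{(i)}_{i+k−j} (E^{(i)}_{i+k−j})ᵀ − ρ0·I is positive definite. Suppose ŵ satisfies the initialization: ŵ(j) ∈ Ŵ for 0 ≤ j ≤ h+l−2, ŵ(j) = ŵ(j−l) for l ≤ j ≤ h+l−2, and Σ_{j=0}^{l−1} Ŵ_{(h+l−2)−j} Ŵ_{(h+l−2)−j}ᵀ − ρ0·I is positive definite (where Ŵ_k ∈ ℝ^{m×h} stacks ŵ(k),…,ŵ(k−h+1) as columns). Then: (a)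 for every i ≥ h+l−1, if the PE constraints hold at all times t with h+l−1 ≤ t < i, then the sequence obtained from ŵ by setting ŵ(i) := ŵ(i−l) satisfies the PE constraints at time i (so a feasible choice always exists); and (b) if the PE constraints hold at every time i ≥ h+l−1, then Σ_{j=0}^{l−1} Ŵ_{i−j} Ŵ_{i−j}ᵀ − ρ0·I is positive definite for every i ≥ h+l−2, i.e. the sequence {ŵ(i)} is SPE of order h at every such time. -/

import Mathlib

open Matrix Finset

/-- The stacked matrix `Ŵ_k ∈ ℝ^{m×h}` whose `(j+1)`-th column is `w (k - j)`. -/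
noncomputable def stacked {ι : Type*} (w : ℕ → ι → ℝ) (h k : ℕ) :
    Matrix ι (Fin h) ℝ := Matrix.of fun a j => w (k - (j : ℕ)) a

/-- The excitation measure `Σ_{j=0}^{l-1} Ŵ_{i-j} Ŵ_{i-j}ᵀ`. -/
noncomputable def exciteSum {ι : Type*} [Fintype ι] (w : ℕ → ι → ℝ) (h l i : ℕ) :
    Matrix ι ι ℝ :=
  ∑ j ∈ Finset.range l, stacked w h (i - j) * (stacked w h (i - j))ᵀ

/-- A sequence is strongly persistently exciting (SPE) of order `h` at time `i`. -/
def SPE {ι : Type*} [Fintype ι] [DecidableEq ι] (φ : ℕ → ι → ℝ) (h i : ℕ) : Prop :=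
  ∃ l : ℕ, 1 ≤ l ∧ h + l ≤ i + 2 ∧ ∃ ρ0 ρ1 : ℝ, 0 < ρ0 ∧ ρ0 < ρ1 ∧
    (exciteSum φ h l i - ρ0 • (1 : Matrix ι ι ℝ)).PosDef ∧
    ((ρ1 • (1 : Matrix ι ι ℝ)) - exciteSum φ h l i).PosDef

/-- The `l`-periodic extension of `w` beyond time `i`: it agrees with `w` up to time `i`
and satisfies `e(t) = e(t - l)` for `t > i`. -/
def pext {α : Type*} (w : ℕ → α) (l i : ℕ) : ℕ → α
  | t => if t ≤ i ∨ l = 0 then w t else pext w l i (t - l)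
  termination_by t => t
  decreasing_by
    rename_i ht
    push_neg at ht
    omega

/-- The PE constraints of the optimization `(16)` hold at time `i`: the new value lies in
`Ŵ`, and the excitation measure of the `l`-periodic extension beyond `i` exceeds `ρ0·I`
on the whole window `i, i+1, …, i+h-1`. -/
def PEok {m : ℕ} (w : ℕ → Fin m → ℝ) (What : Set (Fin m → ℝ)) (h l : ℕ) (ρ0 : ℝ)
    (i : ℕ) : Prop :=
  w i ∈ What ∧ ∀ k < h,
    (exciteSum (pext w l i) h l (i + k) - ρ0 • (1 : Matrix (Fin m) (Fin m) ℝ)).PosDef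

/-- **Theorem 2 (recursive feasibility of the persistence-of-excitation optimization).**
With a buffer initialization on `[0, h+l-2]`: (a) at every time `i ≥ h+l-1`, if the PE
constraints held at all earlier times `t ∈ [h+l-1, i)`, then choosing `ŵ(i) := ŵ(i-l)`
satisfies the PE constraints at time `i`; (b) if the PE constraints hold at every time
`i ≥ h+l-1`, then the excitation measure exceeds `ρ0·I` at every `i ≥ h+l-2`, i.e. the
sequence is SPE of order `h` at every such time. -/
lemma pext_of_le {α : Type*} (w : ℕ → α) (l i t : ℕ) (ht : t ≤ i) : pext w l i t = w t := by
  rw [pext]; simp [ht]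

lemma pext_step {α : Type*} (w : ℕ → α) (l i t : ℕ) (hl : l ≠ 0) (ht : i < t) :
    pext w l i t = pext w l i (t - l) := by
  rw [pext, if_neg]; rintro (hc | hc) <;> omega

lemma stacked_congr {ι : Type*} {e w : ℕ → ι → ℝ} (h k : ℕ)
    (he : ∀ t ≤ k, e t = w t) : stacked e h k = stacked w h k := by
  ext a j
  simp only [stacked, Matrix.of_apply]
  rw [he _ (Nat.sub_le _ _)]

lemma exciteSum_congr {ι : Type*} [Fintype ι] {e w : ℕ → ι → ℝ} (h l i : ℕ)
    (he : ∀ t ≤ i, e t = w t) : exciteSum e h l i = exciteSum w h l i := by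
  unfold exciteSum
  refine Finset.sum_congr rfl fun j _ => ?_
  rw [stacked_congr h (i - j) fun t ht => he t (le_trans ht (Nat.sub_le _ _))]

lemma exciteSum_succ {ι : Type*} [Fintype ι] (e : ℕ → ι → ℝ) (h l t : ℕ) (hl : 1 ≤ l)
    (hs : stacked e h (t + 1) = stacked e h (t + 1 - l)) :
    exciteSum e h l (t + 1) = exciteSum e h l t := by
  obtain ⟨l', rfl⟩ : ∃ l', l = l' + 1 := ⟨l - 1, by omega⟩
  unfold exciteSum
  conv_lhs => rw [Finset.sum_range_succ']
  conv_rhs => rw [Finset.sum_range_succ]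
  congr 1
  · refine Finset.sum_congr rfl fun j _ => ?_
    have hj : t + 1 - (j + 1) = t - j := by omega
    rw [hj]
  · rw [show t + 1 - 0 = t + 1 from rfl, hs, show t + 1 - (l' + 1) = t - l' from by omega]

lemma pext_update {m : ℕ} (w : ℕ → Fin m → ℝ) (l i : ℕ) (hl : 1 ≤ l) (hi : 1 ≤ i) :
    pext (Function.update w i (w (i - l))) l i = pext w l (i - 1) := by
  funext t
  induction t using Nat.strong_induction_on with
  | _ t ih =>
    rcases lt_trichotomy t i with hti | rfl | hti
    · rw [pext_of_le _ _ _ _ (by omega), pext_of_le _ _ _ _ (by omega),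
        Function.update_of_ne (by omega)]
    · rw [pext_of_le _ _ _ _ le_rfl, Function.update_self,
        pext_step _ _ _ _ (by omega) (by omega), pext_of_le _ _ _ _ (by omega)]
    · rw [pext_step (Function.update w i (w (i - l))) l i t (by omega) hti,
        pext_step w l (i - 1) t (by omega) (by omega)]
      exact ih (t - l) (by omega)

lemma exciteSum_isHermitian {ι : Type*} [Fintype ι] (w : ℕ → ι → ℝ) (h l i : ℕ) :
    (exciteSum w h l i).IsHermitian := by
  unfold exciteSum
  refine Finset.sum_induction _ _ (fun A B hA hB => hA.add hB) Matrix.isHermitian_zero ?_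
  intro j _
  have h1 : (stacked w h (i - j))ᵀ = (stacked w h (i - j))ᴴ := by
    ext a b; simp [Matrix.conjTranspose_apply]
  rw [h1]
  exact Matrix.isHermitian_mul_conjTranspose_self _

lemma exists_rho1 {n : ℕ} (M : Matrix (Fin n) (Fin n) ℝ) (hM : M.IsHermitian) (ρ0 : ℝ) :
    ∃ ρ1 : ℝ, ρ0 < ρ1 ∧ ((ρ1 • (1 : Matrix (Fin n) (Fin n) ℝ)) - M).PosDef := by
  set C : ℝ := ∑ i : Fin n, ∑ j : Fin n, |M i j| with hC
  refine ⟨max ρ0 C + 1, by have := le_max_left ρ0 C; linarith, ?_⟩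
  have hherm : (1 : Matrix (Fin n) (Fin n) ℝ).IsHermitian := Matrix.isHermitian_one
  have hsm : ((max ρ0 C + 1) • (1 : Matrix (Fin n) (Fin n) ℝ)).IsHermitian := by
    simp [Matrix.IsHermitian]
  refine Matrix.posDef_iff_dotProduct_mulVec.mpr ⟨hsm.sub hM, fun x hx => ?_⟩
  have hS : 0 < x ⬝ᵥ x := by
    obtain ⟨i, hi⟩ := Function.ne_iff.mp hx
    exact Finset.sum_pos' (fun k _ => mul_self_nonneg _)
      ⟨i, Finset.mem_univ i, mul_self_pos.mpr hi⟩
  have hsq : ∀ i j : Fin n, x i * (M i j * x j) ≤ |M i j| * (x ⬝ᵥ x) := by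
    intro i j
    have hii : x i * x i ≤ x ⬝ᵥ x :=
      Finset.single_le_sum (fun k _ => mul_self_nonneg (x k)) (Finset.mem_univ i)
    have hjj : x j * x j ≤ x ⬝ᵥ x :=
      Finset.single_le_sum (fun k _ => mul_self_nonneg (x k)) (Finset.mem_univ j)
    have h1 : x i * (M i j * x j) ≤ |x i * (M i j * x j)| := le_abs_self _
    have h2 : |x i * (M i j * x j)| = |M i j| * (|x i| * |x j|) := by
      rw [abs_mul, abs_mul]; ring
    have h3 : |x i| * |x j| ≤ x ⬝ᵥ x := by
      nlinarith [abs_nonneg (x i), abs_nonneg (x j), abs_mul_abs_self (x i), abs_mul_abs_self (x j)]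
    nlinarith [abs_nonneg (M i j)]
  have key : x ⬝ᵥ M *ᵥ x ≤ C * (x ⬝ᵥ x) := by
    have hexp : x ⬝ᵥ M *ᵥ x = ∑ i, ∑ j, x i * (M i j * x j) := by
      simp [dotProduct, Matrix.mulVec, Finset.mul_sum]
    rw [hexp, hC, Finset.sum_mul]
    refine Finset.sum_le_sum fun i _ => ?_
    rw [Finset.sum_mul]
    exact Finset.sum_le_sum fun j _ => hsq i j
  have expand : x ⬝ᵥ (((max ρ0 C + 1) • (1 : Matrix (Fin n) (Fin n) ℝ) - M) *ᵥ x)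
      = (max ρ0 C + 1) * (x ⬝ᵥ x) - x ⬝ᵥ M *ᵥ x := by
    rw [Matrix.sub_mulVec, Matrix.smul_mulVec, Matrix.one_mulVec, dotProduct_sub,
      dotProduct_smul, smul_eq_mul]
  have hCle := le_max_right ρ0 C
  have : 0 < x ⬝ᵥ (((max ρ0 C + 1) • (1 : Matrix (Fin n) (Fin n) ℝ) - M) *ᵥ x) := by
    rw [expand]; nlinarith
  simpa using this

theorem pe_optimization_recursive_feasibility {m : ℕ} (h l : ℕ)
    (hm : 1 ≤ m) (hh : 1 ≤ h) (hl : 1 ≤ l)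
    (ρ0 : ℝ) (hρ0 : 0 < ρ0)
    (What : Set (Fin m → ℝ)) (hWne : What.Nonempty)
    (w : ℕ → Fin m → ℝ)
    (hmem : ∀ j : ℕ, j + 2 ≤ h + l → w j ∈ What)
    (hper : ∀ j : ℕ, l ≤ j → j + 2 ≤ h + l → w j = w (j - l))
    (hpe : (exciteSum w h l (h + l - 2) - ρ0 • (1 : Matrix (Fin m) (Fin m) ℝ)).PosDef) :
    (∀ i : ℕ, h + l ≤ i + 1 →
      (∀ t : ℕ, h + l ≤ t + 1 → t < i → PEok w What h l ρ0 t) →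
      PEok (Function.update w i (w (i - l))) What h l ρ0 i) ∧
    ((∀ i : ℕ, h + l ≤ i + 1 → PEok w What h l ρ0 i) →
      ∀ i : ℕ, h + l ≤ i + 2 →
        (exciteSum w h l i - ρ0 • (1 : Matrix (Fin m) (Fin m) ℝ)).PosDef ∧ SPE w h i) := by
  have hl0 : l ≠ 0 := by omega
  constructor
  · -- part (a)
    intro i hi hprev
    have hi1 : 1 ≤ i := by omega
    have hpe' : pext (Function.update w i (w (i - l))) l i = pext w l (i - 1) :=
      pext_update w l i hl hi1
    constructor
    · show Function.update w i (w (i - l)) i ∈ What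
      rw [Function.update_self]
      by_cases hc : i - l + 2 ≤ h + l
      · exact hmem _ hc
      · exact (hprev (i - l) (by omega) (by omega)).1
    · intro k hk
      rw [hpe']
      by_cases hcase : h + l ≤ i
      · -- i > h + l - 1 : use feasibility at time i - 1
        have hprev' := (hprev (i - 1) (by omega) (by omega)).2
        by_cases hk1 : k + 1 < h
        · have hp := hprev' (k + 1) hk1
          rw [show i + k = (i - 1) + (k + 1) from by omega]
          exact hp
        · have hk' : k = h - 1 := by omega
          have hp := hprev' k hk
          have hst : stacked (pext w l (i - 1)) h ((i - 1 + k) + 1)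
              = stacked (pext w l (i - 1)) h ((i - 1 + k) + 1 - l) := by
            ext a j
            simp only [stacked, Matrix.of_apply]
            have hj := j.isLt
            rw [pext_step w l (i - 1) (i - 1 + k + 1 - (j : ℕ)) hl0 (by omega),
              show i - 1 + k + 1 - (j : ℕ) - l = i - 1 + k + 1 - l - (j : ℕ) from by omega]
          have hE := exciteSum_succ (pext w l (i - 1)) h l (i - 1 + k) hl hst
          rw [show i + k = (i - 1 + k) + 1 from by omega, hE]
          exact hp
      · -- i = h + l - 1 : use the initialization
        have hieq : i = h + l - 1 := by omega
        have hiper : ∀ u, l ≤ u → pext w l (i - 1) u = pext w l (i - 1) (u - l) := by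
          intro u hu
          by_cases hu2 : u ≤ i - 1
          · rw [pext_of_le _ _ _ _ hu2, pext_of_le _ _ _ _ (by omega)]
            rw [hper u hu (by omega)]
          · exact pext_step _ _ _ _ hl0 (by omega)
        have hstep : ∀ n : ℕ, exciteSum (pext w l (i - 1)) h l ((i - 1) + n)
            = exciteSum (pext w l (i - 1)) h l (i - 1) := by
          intro n
          induction n with
          | zero => rfl
          | succ n ihn =>
            have hst : stacked (pext w l (i - 1)) h ((i - 1 + n) + 1)
                = stacked (pext w l (i - 1)) h ((i - 1 + n) + 1 - l) := by
              ext a j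
              simp only [stacked, Matrix.of_apply]
              have hj := j.isLt
              rw [hiper (i - 1 + n + 1 - (j : ℕ)) (by omega),
                show i - 1 + n + 1 - (j : ℕ) - l = i - 1 + n + 1 - l - (j : ℕ) from by omega]
            rw [show (i - 1) + (n + 1) = ((i - 1 + n)) + 1 from by omega,
              exciteSum_succ (pext w l (i - 1)) h l (i - 1 + n) hl hst]
            exact ihn
        have hcg : exciteSum (pext w l (i - 1)) h l (i - 1) = exciteSum w h l (h + l - 2) := by
          rw [show i - 1 = h + l - 2 from by omega]
          exact exciteSum_congr h l (h + l - 2) fun t ht => pext_of_le _ _ _ _ (by omega)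
        rw [show i + k = (i - 1) + (k + 1) from by omega, hstep (k + 1), hcg]
        exact hpe
  · -- part (b)
    intro hall i hi2
    have hfirst : (exciteSum w h l i - ρ0 • (1 : Matrix (Fin m) (Fin m) ℝ)).PosDef := by
      by_cases hcase : h + l ≤ i + 1
      · have hp := (hall i hcase).2 0 (by omega)
        rw [Nat.add_zero,
          exciteSum_congr h l i fun t ht => pext_of_le w l i t ht] at hp
        exact hp
      · rw [show i = h + l - 2 from by omega]
        exact hpe
    obtain ⟨ρ1, hρ1, hpos⟩ := exists_rho1 (exciteSum w h l i) (exciteSum_isHermitian w h l i) ρ0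
    exact ⟨hfirst, l, hl, hi2, ρ0, ρ1, hρ0, hρ1, hfirst, hpos⟩
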